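/- arXiv:2501.15751 — 2 statements merged into one kernel-verified Lean document; each statement's English description precedes it below -/
import Mathlib

section
/- Mangat's randomized response mechanism satisfies (ln(1/(1-p)), ln(1-p), 0)-asymmetric differential privacy on sets: for any set S and element x, if S' = S \ {x}, then Pr[x ∈ A(S)] / Pr[x ∈ A(S')] = 1/(1-p), and if S' = S ∪ {x} with x ∉ S, then Pr[x ∈ A(S)] / Pr[x ∈ A(S')] = 1-p. -/
/-- Mangat's randomized response: each `x ∈ S` is kept with probability 1,
each `x ∉ S` is added independently with probability `1 - p`.  The probability
that the output set is exactly `T`. -/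
def mangatProb {U : Type*} [Fintype U] [DecidableEq U] (p : ℝ) (S T : Finset U) : ℝ :=
  ∏ x : U, if x ∈ S then (if x ∈ T then 1 else 0) else (if x ∈ T then 1 - p else p)

/-- Probability that `x` belongs to the output of Mangat's mechanism on input `S`. -/
def mangatMemProb {U : Type*} [Fintype U] [DecidableEq U] (p : ℝ) (S : Finset U) (x : U) : ℝ :=
  ∑ T : Finset U, if x ∈ T then mangatProb p S T else 0

lemma sum_prod_ite {U : Type*} [Fintype U] [DecidableEq U] (a b : U → ℝ) :
    ∑ T : Finset U, ∏ y : U, (if y ∈ T then a y else b y) = ∏ y : U, (a y + b y) := by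
  rw [Finset.prod_add, ← Finset.powerset_univ]
  apply Finset.sum_congr rfl
  intro T hT
  rw [Finset.prod_ite]
  congr 1
  · congr 1; ext y; simp
  · congr 1; ext y; simp [Finset.mem_sdiff]

lemma mangatMemProb_eq {U : Type*} [Fintype U] [DecidableEq U] (p : ℝ) (S : Finset U) (x : U) :
    mangatMemProb p S x = if x ∈ S then 1 else 1 - p := by
  classical
  set a : U → ℝ := fun y => if y ∈ S then 1 else 1 - p with ha
  set b : U → ℝ := fun y => if y = x then 0 else if y ∈ S then 0 else p with hb
  have key : mangatMemProb p S x = ∑ T : Finset U, ∏ y : U, (if y ∈ T then a y else b y) := by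
    unfold mangatMemProb mangatProb
    apply Finset.sum_congr rfl
    intro T _
    by_cases hxT : x ∈ T
    · simp only [hxT, if_true]
      apply Finset.prod_congr rfl
      intro y _
      by_cases hyT : y ∈ T
      · simp [ha, hb, hyT]
      · have hyx : y ≠ x := fun h => hyT (h ▸ hxT)
        simp [ha, hb, hyT, hyx]
    · simp only [hxT, if_false]
      symm
      apply Finset.prod_eq_zero (Finset.mem_univ x)
      simp [hb, hxT]
  rw [key, sum_prod_ite]
  rw [Finset.prod_eq_single x]
  · simp [ha, hb]
  · intro y _ hy
    by_cases hyS : y ∈ S <;> simp [ha, hb, hy, hyS]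
  · simp

/-- Mangat's randomized response satisfies `(ln(1/(1-p)), ln(1-p), 0)`-asymmetric
differential privacy on sets: removing an element `x ∈ S` changes the probability of
`x` being in the output by exactly a factor `1/(1-p)`, and adding an element `x ∉ S`
changes it by exactly a factor `1-p`. -/
theorem mangat_asymmetric_dp {U : Type*} [Fintype U] [DecidableEq U]
    (p : ℝ) (hp : p ∈ Set.Ioo (0 : ℝ) 1) (S : Finset U) (x : U) :
    (x ∈ S → mangatMemProb p S x / mangatMemProb p (S.erase x) x = 1 / (1 - p)) ∧
    (x ∉ S → mangatMemProb p S x / mangatMemProb p (insert x S) x = 1 - p) := by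
  have hq : (1:ℝ) - p ≠ 0 := by have := hp.2; linarith
  constructor
  · intro hx
    rw [mangatMemProb_eq, mangatMemProb_eq]
    simp [hx, Finset.mem_erase]
  · intro hx
    rw [mangatMemProb_eq, mangatMemProb_eq]
    simp [hx, Finset.mem_insert]
end

section
/- Let p_fp ∈ [0,1], p_s ∈ (0,1), δ ∈ (0,1) with p_s > δ. Then the BP-test adversary's expected profit E = (p_s + p_fp^t(1-p_s))·((1/δ)(p_s + p_fp(1-p_s)) - (1/(1-δ))(1-p_fp)(1-p_s)) is bounded below by a positive constant independent of t, namely (1/δ)p_s² - (1/(1-δ))p_s(1-p_s) > 0. -/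
/-- If `p_s > δ`, the BP-test adversary's expected profit is bounded below by the
positive constant `(1/δ)p_s² - (1/(1-δ))p_s(1-p_s)`, independently of `t`. -/
theorem bp_profit_positive_lower_bound (ps pfp δ : ℝ) (t : ℕ)
    (hpfp : pfp ∈ Set.Icc (0 : ℝ) 1) (hps : ps ∈ Set.Ioo (0 : ℝ) 1)
    (hδ : δ ∈ Set.Ioo (0 : ℝ) 1) (hgt : ps > δ) :
    ((ps + pfp ^ t * (1 - ps)) *
        ((1 / δ) * (ps + pfp * (1 - ps)) - (1 / (1 - δ)) * (1 - pfp) * (1 - ps))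
      ≥ (1 / δ) * ps ^ 2 - (1 / (1 - δ)) * (ps * (1 - ps))) ∧
    0 < (1 / δ) * ps ^ 2 - (1 / (1 - δ)) * (ps * (1 - ps)) := by
  obtain ⟨hp0, hp1⟩ := hpfp
  obtain ⟨hs0, hs1⟩ := hps
  obtain ⟨hd0, hd1⟩ := hδ
  have hd1' : (0:ℝ) < 1 - δ := by linarith
  have ha : (0:ℝ) < 1 / δ := by positivity
  have hb : (0:ℝ) < 1 / (1 - δ) := by positivity
  have ha1 : (1:ℝ) < (1 / δ) * ps := by
    rw [div_mul_eq_mul_div, lt_div_iff₀ hd0]; linarith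
  have hb1 : (1 / (1 - δ)) * (1 - ps) < 1 := by
    rw [div_mul_eq_mul_div, div_lt_iff₀ hd1']; linarith
  have hC : 0 < (1 / δ) * ps ^ 2 - (1 / (1 - δ)) * (ps * (1 - ps)) := by
    have : (1 / δ) * ps ^ 2 - (1 / (1 - δ)) * (ps * (1 - ps))
        = ps * ((1 / δ) * ps - (1 / (1 - δ)) * (1 - ps)) := by ring
    rw [this]
    apply mul_pos hs0
    linarith
  refine ⟨?_, hC⟩
  have hB0 : 0 < (1 / δ) * ps - (1 / (1 - δ)) * (1 - ps) := by linarith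
  have hB : (1 / δ) * ps - (1 / (1 - δ)) * (1 - ps)
      ≤ (1 / δ) * (ps + pfp * (1 - ps)) - (1 / (1 - δ)) * (1 - pfp) * (1 - ps) := by
    nlinarith [mul_nonneg ha.le (mul_nonneg hp0 (by linarith : (0:ℝ) ≤ 1 - ps)),
      mul_nonneg hb.le (mul_nonneg hp0 (by linarith : (0:ℝ) ≤ 1 - ps))]
  have hpt : 0 ≤ pfp ^ t := pow_nonneg hp0 t
  have hA : ps ≤ ps + pfp ^ t * (1 - ps) := by nlinarith
  calc (ps + pfp ^ t * (1 - ps)) *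
        ((1 / δ) * (ps + pfp * (1 - ps)) - (1 / (1 - δ)) * (1 - pfp) * (1 - ps))
      ≥ ps * ((1 / δ) * (ps + pfp * (1 - ps)) - (1 / (1 - δ)) * (1 - pfp) * (1 - ps)) := by
        apply mul_le_mul_of_nonneg_right hA (by linarith)
    _ ≥ ps * ((1 / δ) * ps - (1 / (1 - δ)) * (1 - ps)) :=
        mul_le_mul_of_nonneg_left hB hs0.le
    _ = (1 / δ) * ps ^ 2 - (1 / (1 - δ)) * (ps * (1 - ps)) := by ring
end
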